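/- Strengthened uniqueness in homogeneous monoids: if w, u, v ∈ S and d ∈ S are such that d is a greatest common divisor of w and u (d divides both and every common divisor of w and u divides d), d is also a greatest common divisor of w and v, and w·S ∩ u·S = w·S ∩ v·S, then u = v. -/
import Mathlib


open scoped BigOperators

/-- `u` divides `w` in `S`: `w ∈ u·S`. -/
def SDvd {G : Type*} [Group G] (S : Submonoid G) (u w : G) : Prop := ∃ s ∈ S, w = u * s

/-- The left set `u·S = {u * s : s ∈ S}`. -/
def leftSet {G : Type*} [Group G] (S : Submonoid G) (u : G) : Set G := {w | ∃ s ∈ S, w = u * s}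

/-- `τ(u)`: the number of ordered factorizations `u = v * w` with `v, w ∈ S`. -/
noncomputable def tau {G : Type*} [Group G] (S : Submonoid G) (u : G) : ℕ :=
  Set.ncard {p : G × G | p.1 ∈ S ∧ p.2 ∈ S ∧ p.1 * p.2 = u}

/-- An integral monoid: a submonoid of a group satisfying Axioms I, II, III. -/
structure IntegralMonoid {G : Type*} [Group G] (S : Submonoid G) : Prop where
  ax1 : ∀ u ∈ S, u⁻¹ ∈ S → u = 1
  ax2 : ∀ u : G, ∃ x ∈ S, ∃ y ∈ S, u = x * y⁻¹ ∧
        ∀ z ∈ S, ∀ w ∈ S, u = z * w⁻¹ → ∃ c ∈ S, z = x * c ∧ w = y * c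
  ax3 : ∀ u ∈ S, {p : G × G | p.1 ∈ S ∧ p.2 ∈ S ∧ p.1 * p.2 = u}.Finite

/-- Axiom IV′ (homogeneity), in the equivalent form proved in the paper. -/
def Homogeneous {G : Type*} [Group G] (S : Submonoid G) : Prop :=
  ∀ w u v : G, w ∈ S → u ∈ S → v ∈ S →
    (∀ d ∈ S, SDvd S d w → SDvd S d u → d = 1) →
    (∀ d ∈ S, SDvd S d w → SDvd S d v → d = 1) →
    leftSet S w ∩ leftSet S u = leftSet S w ∩ leftSet S v → u = v

theorem lcm_gcd_unique {G : Type*} [Group G] (S : Submonoid G)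
    (hS : IntegralMonoid S) (hhom : Homogeneous S)
    (w u v d : G) (hw : w ∈ S) (hu : u ∈ S) (hv : v ∈ S) (hd : d ∈ S)
    (hd1 : SDvd S d w) (hd2 : SDvd S d u)
    (hd3 : ∀ e ∈ S, SDvd S e w → SDvd S e u → SDvd S e d)
    (hd4 : SDvd S d v)
    (hd5 : ∀ e ∈ S, SDvd S e w → SDvd S e v → SDvd S e d)
    (hlcm : leftSet S w ∩ leftSet S u = leftSet S w ∩ leftSet S v) :
    u = v := by
  obtain ⟨w', hw', hweq⟩ := hd1
  obtain ⟨u', hu', hueq⟩ := hd2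
  obtain ⟨v', hv', hveq⟩ := hd4
  subst hweq hueq hveq
  -- coprimality transfer
  have cop : ∀ (x : G), x ∈ S →
      (∀ e ∈ S, SDvd S e (d * w') → SDvd S e (d * x) → SDvd S e d) →
      (∀ e ∈ S, SDvd S e w' → SDvd S e x → e = 1) := by
    intro x hx h3 e he ⟨s, hs, hws⟩ ⟨t, ht, hxt⟩
    have h1 : SDvd S (d * e) (d * w') := ⟨s, hs, by rw [hws, mul_assoc]⟩
    have h2 : SDvd S (d * e) (d * x) := ⟨t, ht, by rw [hxt, mul_assoc]⟩
    obtain ⟨c, hc, hdc⟩ := h3 (d * e) (S.mul_mem hd he) h1 h2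
    have hec : e * c = 1 := by
      rw [mul_assoc] at hdc
      nth_rewrite 1 [show d = d * 1 by rw [mul_one]] at hdc
      exact (mul_left_cancel hdc).symm
    have hinv : e⁻¹ ∈ S := by
      rw [inv_eq_of_mul_eq_one_right hec]; exact hc
    exact hS.ax1 e he hinv
  -- leftSet transfer
  have lset : ∀ (a b : G), (leftSet S a ∩ leftSet S b) =
      (fun x => d * x) ⁻¹' (leftSet S (d * a) ∩ leftSet S (d * b)) := by
    intro a b
    ext x
    constructor
    · rintro ⟨⟨s, hs, hxs⟩, ⟨t, ht, hxt⟩⟩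
      exact ⟨⟨s, hs, by rw [hxs, mul_assoc]⟩, ⟨t, ht, by rw [hxt, mul_assoc]⟩⟩
    · rintro ⟨⟨s, hs, hxs⟩, ⟨t, ht, hxt⟩⟩
      rw [mul_assoc] at hxs hxt
      exact ⟨⟨s, hs, mul_left_cancel hxs⟩, ⟨t, ht, mul_left_cancel hxt⟩⟩
  have key : u' = v' := by
    apply hhom w' u' v' hw' hu' hv' (cop u' hu' hd3) (cop v' hv' hd5)
    rw [lset w' u', lset w' v', hlcm]
  rw [key]
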